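/- Suppose the sequences are generated by Algorithm II. Then for every integer k ≥ 1 there exists an index i with 1 ≤ i ≤ k such that simultaneously λ_i‖w_i‖² ≤ ((1 + σ)/(1 − σ))·(2E_0/Σ_{j=1}^k γ_j^{−1}) and ε_i ≤ (σ²/(2(1 − σ²)))·(2E_0/Σ_{j=1}^k γ_j^{−1}). -/

import Mathlib

open scoped RealInnerProductSpace

private lemma step_arith (P Pk A B W U R e a g g' l s : ℝ)
    (hg : 0 < g) (hg' : 0 < g') (hgg : g' = (1-a)*g)
    (hl : 0 < l) (hal : a^2 = l*g')
    (hP : P ≤ (1-a)*Pk + A + a*B + e)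
    (hN : l^2*W + 2*l*A + U + 2*l*e ≤ s^2 * U) :
    (1 - s^2) * U ≤
      2*l*g'*(((1/g)*Pk + (1/2)*R) - ((1/g')*P + (1/2)*(R - 2*(a/g')*B + (a/g')^2*W))) := by
  have h1 : 2*l*g'*(1/g)*Pk = 2*l*(1-a)*Pk := by rw [hgg]; field_simp
  have h2 : 2*l*g'*(1/g')*P = 2*l*P := by field_simp
  have h3 : 2*l*g'*(a/g')*B = 2*l*a*B := by field_simp
  have h4 : 2*l*g'*((a/g')^2*W) = 2*l*l*W := by rw [div_pow, hal]; field_simp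
  nlinarith [hP, hN, mul_le_mul_of_nonneg_left hP (by positivity : (0:ℝ) ≤ 2*l)]


set_option maxHeartbeats 2000000 in
/-- for sequences generated by Algorithm II, for every `k ≥ 1` there is
`1 ≤ i ≤ k` with simultaneously
`λ_i‖w_i‖² ≤ ((1+σ)/(1−σ))·(2E_0/Σ_{j=1}^k γ_j⁻¹)` and
`ε_i ≤ (σ²/(2(1−σ²)))·(2E_0/Σ_{j=1}^k γ_j⁻¹)`. -/
theorem stmt_15 (d p : ℕ) (hd : 1 ≤ d) (hp : 1 ≤ p)
    (Φ : EuclideanSpace ℝ (Fin d) → ℝ)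
    (hconv : ConvexOn ℝ Set.univ Φ) (hsmooth : ContDiff ℝ 2 Φ)
    (σ θ : ℝ) (hσ : σ ∈ Set.Ioo (0:ℝ) 1) (hθ : 0 < θ)
    (xstar : EuclideanSpace ℝ (Fin d)) (hstar : ∀ y, Φ xstar ≤ Φ y)
    (x v w vt : ℕ → EuclideanSpace ℝ (Fin d)) (γ eps lam α E : ℕ → ℝ)
    (hproj : ∀ z : EuclideanSpace ℝ (Fin d), (∀ y, Φ z ≤ Φ y) → ‖v 0 - xstar‖ ≤ ‖v 0 - z‖)
    (hγ0 : γ 0 = 1) (hγpos : ∀ k : ℕ, 0 < γ k)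
    (hlampos : ∀ k : ℕ, 0 < lam (k+1)) (hepsnn : ∀ k : ℕ, 0 ≤ eps (k+1))
    (hα : ∀ k : ℕ, α (k+1) ∈ Set.Ioo (0:ℝ) 1)
    (hαeq : ∀ k : ℕ, (α (k+1)) ^ 2 = lam (k+1) * ((1 - α (k+1)) * γ k))
    (hγ : ∀ k : ℕ, γ (k+1) = (1 - α (k+1)) * γ k)
    (hvt : ∀ k : ℕ, vt k = (1 - α (k+1)) • x k + α (k+1) • v k)
    (hw : ∀ k : ℕ, ∀ y : EuclideanSpace ℝ (Fin d),
      Φ (x (k+1)) + ⟪y - x (k+1), w (k+1)⟫ - eps (k+1) ≤ Φ y)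
    (herr : ∀ k : ℕ,
      ‖lam (k+1) • w (k+1) + x (k+1) - vt k‖ ^ 2 + 2 * lam (k+1) * eps (k+1) ≤
        σ ^ 2 * ‖x (k+1) - vt k‖ ^ 2)
    (hls : ∀ k : ℕ, θ ≤ lam (k+1) * ‖x (k+1) - vt k‖ ^ (p - 1))
    (hv : ∀ k : ℕ, v (k+1) = v k - (α (k+1) / γ (k+1)) • w (k+1))
    (hE : ∀ k : ℕ, E k = (1 / γ k) * (Φ (x k) - Φ xstar) + (1/2) * ‖v k - xstar‖ ^ 2) :
    ∀ k : ℕ, 1 ≤ k → ∃ i : ℕ, 1 ≤ i ∧ i ≤ k ∧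
      lam i * ‖w i‖ ^ 2 ≤
        ((1 + σ) / (1 - σ)) * (2 * E 0 / ∑ j ∈ Finset.Icc 1 k, (γ j)⁻¹) ∧
      eps i ≤ (σ ^ 2 / (2 * (1 - σ ^ 2))) *
        (2 * E 0 / ∑ j ∈ Finset.Icc 1 k, (γ j)⁻¹) := by
  obtain ⟨hσ0, hσ1⟩ := hσ
  have hσsq : (0:ℝ) < 1 - σ^2 := by nlinarith
  have h1σ : (0:ℝ) < 1 - σ := by linarith
  -- per-step key inequality
  have key : ∀ n : ℕ, (1 - σ^2) * ‖x (n+1) - vt n‖^2 ≤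
      2 * lam (n+1) * γ (n+1) * (E n - E (n+1)) := by
    intro n
    obtain ⟨ha0, ha1⟩ := hα n
    have hg := hγpos n
    have hg' := hγpos (n+1)
    have hl := hlampos n
    have he := hepsnn n
    have hal : (α (n+1))^2 = lam (n+1) * γ (n+1) := by rw [hαeq n, hγ n]
    have h1 := hw n (x n)
    have h2 := hw n xstar
    have hcomb : (1 - α (n+1)) * ⟪x n - x (n+1), w (n+1)⟫
        + α (n+1) * ⟪xstar - x (n+1), w (n+1)⟫
        = -⟪x (n+1) - vt n, w (n+1)⟫ - α (n+1) * ⟪v n - xstar, w (n+1)⟫ := by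
      have hvec : (1 - α (n+1)) • (x n - x (n+1)) + α (n+1) • (xstar - x (n+1))
          = -(x (n+1) - vt n) - α (n+1) • (v n - xstar) := by
        rw [hvt n]; module
      rw [← real_inner_smul_left, ← real_inner_smul_left, ← inner_add_left, hvec]
      rw [inner_sub_left, inner_neg_left, real_inner_smul_left]
    have hP : Φ (x (n+1)) - Φ xstar ≤ (1 - α (n+1)) * (Φ (x n) - Φ xstar)
        + ⟪x (n+1) - vt n, w (n+1)⟫ + α (n+1) * ⟪v n - xstar, w (n+1)⟫ + eps (n+1) := by
      nlinarith [mul_le_mul_of_nonneg_left h1 (by linarith : (0:ℝ) ≤ 1 - α (n+1)),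
        mul_le_mul_of_nonneg_left h2 (le_of_lt ha0)]
    have hlu : lam (n+1) • w (n+1) + x (n+1) - vt n
        = lam (n+1) • w (n+1) + (x (n+1) - vt n) := by abel
    have hN : ‖lam (n+1) • w (n+1) + x (n+1) - vt n‖^2
        = (lam (n+1))^2 * ‖w (n+1)‖^2 + 2 * lam (n+1) * ⟪x (n+1) - vt n, w (n+1)⟫
          + ‖x (n+1) - vt n‖^2 := by
      rw [hlu, norm_add_sq_real, real_inner_smul_left, real_inner_comm, norm_smul]
      rw [mul_pow, Real.norm_eq_abs, sq_abs]
      ring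
    have herr' : (lam (n+1))^2 * ‖w (n+1)‖^2 + 2 * lam (n+1) * ⟪x (n+1) - vt n, w (n+1)⟫
        + ‖x (n+1) - vt n‖^2 + 2 * lam (n+1) * eps (n+1)
        ≤ σ^2 * ‖x (n+1) - vt n‖^2 := by
      have := herr n
      rw [hN] at this
      linarith
    have hR' : ‖v (n+1) - xstar‖^2 = ‖v n - xstar‖^2
        - 2 * (α (n+1) / γ (n+1)) * ⟪v n - xstar, w (n+1)⟫
        + (α (n+1) / γ (n+1))^2 * ‖w (n+1)‖^2 := by
      rw [hv n, sub_right_comm, norm_sub_sq_real, real_inner_smul_right, norm_smul]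
      rw [mul_pow, Real.norm_eq_abs, sq_abs]
      ring
    rw [hE n, hE (n+1), hR']
    exact step_arith _ _ _ _ _ _ _ _ _ _ _ _ _ hg hg' (hγ n) hl hal hP herr'
  -- nonnegativity of E
  have Enn : ∀ n : ℕ, 0 ≤ E n := by
    intro n
    rw [hE n]
    have h1 : 0 ≤ (1 / γ n) * (Φ (x n) - Φ xstar) := by
      apply mul_nonneg (one_div_pos.mpr (hγpos n)).le
      linarith [hstar (x n)]
    have h2 : (0:ℝ) ≤ (1/2) * ‖v n - xstar‖ ^ 2 := by positivity
    linarith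
  have Dnn : ∀ n : ℕ, 0 ≤ E n - E (n+1) := by
    intro n
    nlinarith [key n, mul_pos (hlampos n) (hγpos (n+1)),
      mul_nonneg hσsq.le (pow_nonneg (norm_nonneg (x (n+1) - vt n)) 2)]
  -- per-step bounds on lam‖w‖² and eps
  have bound1 : ∀ n : ℕ, (1 - σ) * (lam (n+1) * ‖w (n+1)‖^2)
      ≤ 2 * (1 + σ) * (γ (n+1) * (E n - E (n+1))) := by
    intro n
    have hl := hlampos n
    have he := hepsnn n
    have hlu : lam (n+1) • w (n+1) + x (n+1) - vt n
        = lam (n+1) • w (n+1) + (x (n+1) - vt n) := by abel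
    have h5 : ‖lam (n+1) • w (n+1) + (x (n+1) - vt n)‖^2 ≤ (σ * ‖x (n+1) - vt n‖)^2 := by
      have h := herr n
      rw [hlu] at h
      nlinarith [mul_nonneg hl.le he]
    have h6 : ‖lam (n+1) • w (n+1) + (x (n+1) - vt n)‖ ≤ σ * ‖x (n+1) - vt n‖ := by
      have hs := Real.sqrt_le_sqrt h5
      rwa [Real.sqrt_sq (norm_nonneg _), Real.sqrt_sq (by positivity)] at hs
    have h7 : lam (n+1) * ‖w (n+1)‖ ≤ (1 + σ) * ‖x (n+1) - vt n‖ := by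
      have e1 : lam (n+1) * ‖w (n+1)‖ = ‖lam (n+1) • w (n+1)‖ := by
        rw [norm_smul, Real.norm_eq_abs, abs_of_pos hl]
      have e2 : ‖lam (n+1) • w (n+1)‖
          ≤ ‖lam (n+1) • w (n+1) + (x (n+1) - vt n)‖ + ‖x (n+1) - vt n‖ := by
        have := norm_sub_le (lam (n+1) • w (n+1) + (x (n+1) - vt n)) (x (n+1) - vt n)
        rwa [add_sub_cancel_right] at this
      rw [e1]
      linarith
    have h8 : (lam (n+1))^2 * ‖w (n+1)‖^2 ≤ (1 + σ)^2 * ‖x (n+1) - vt n‖^2 := by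
      nlinarith [mul_self_le_mul_self (by positivity : (0:ℝ) ≤ lam (n+1) * ‖w (n+1)‖) h7]
    nlinarith [key n, hl,
      mul_le_mul_of_nonneg_left (key n) (by linarith : (0:ℝ) ≤ 1 + σ),
      mul_le_mul_of_nonneg_left h8 h1σ.le]
  have bound2 : ∀ n : ℕ, (1 - σ^2) * eps (n+1)
      ≤ σ^2 * (γ (n+1) * (E n - E (n+1))) := by
    intro n
    have hl := hlampos n
    have hA : 2 * lam (n+1) * eps (n+1) ≤ σ^2 * ‖x (n+1) - vt n‖^2 := by
      linarith [herr n, pow_nonneg (norm_nonneg (lam (n+1) • w (n+1) + x (n+1) - vt n)) 2]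
    nlinarith [hl, mul_le_mul_of_nonneg_left hA hσsq.le,
      mul_le_mul_of_nonneg_left (key n) (sq_nonneg σ)]
  -- aggregation
  intro k hk
  set S := ∑ j ∈ Finset.Icc 1 k, (γ j)⁻¹ with hSdef
  have hne : (Finset.Icc 1 k).Nonempty := Finset.nonempty_Icc.mpr hk
  have hSpos : 0 < S := Finset.sum_pos (fun j _ => inv_pos.mpr (hγpos j)) hne
  obtain ⟨i, hiIcc, hmin⟩ :=
    Finset.exists_min_image (Finset.Icc 1 k) (fun j => γ j * (E (j-1) - E j)) hne
  obtain ⟨hi1, hik⟩ := Finset.mem_Icc.mp hiIcc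
  have htel : ∑ j ∈ Finset.Icc 1 k, (E (j-1) - E j) = E 0 - E k := by
    rw [← Finset.Ico_add_one_right_eq_Icc, Finset.sum_Ico_eq_sum_range]
    have hr : k + 1 - 1 = k := by omega
    rw [hr]
    rw [Finset.sum_congr rfl (fun i _ => show E (1 + i - 1) - E (1 + i) = E i - E (i+1) by
      congr 1 <;> (congr 1; omega))]
    exact Finset.sum_range_sub' E k
  have hsum : S * (γ i * (E (i-1) - E i)) ≤ E 0 := by
    calc S * (γ i * (E (i-1) - E i))
        = ∑ j ∈ Finset.Icc 1 k, (γ j)⁻¹ * (γ i * (E (i-1) - E i)) := by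
          rw [hSdef, Finset.sum_mul]
      _ ≤ ∑ j ∈ Finset.Icc 1 k, (γ j)⁻¹ * (γ j * (E (j-1) - E j)) :=
          Finset.sum_le_sum (fun j hj =>
            mul_le_mul_of_nonneg_left (hmin j hj) (inv_pos.mpr (hγpos j)).le)
      _ = ∑ j ∈ Finset.Icc 1 k, (E (j-1) - E j) :=
          Finset.sum_congr rfl (fun j _ => by
            rw [← mul_assoc, inv_mul_cancel₀ (hγpos j).ne', one_mul])
      _ = E 0 - E k := htel
      _ ≤ E 0 := by linarith [Enn k]
  have hφ : γ i * (E (i-1) - E i) ≤ E 0 / S := by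
    rw [le_div_iff₀ hSpos]
    linarith [hsum]
  obtain ⟨m, rfl⟩ : ∃ m, i = m + 1 := ⟨i - 1, (Nat.succ_pred_eq_of_pos hi1).symm⟩
  have hφ' : γ (m+1) * (E m - E (m+1)) ≤ E 0 / S := by simpa using hφ
  refine ⟨m+1, hi1, hik, ?_, ?_⟩
  · have hb := bound1 m
    have hkey2 : ((1 + σ) / (1 - σ)) * (2 * E 0 / S) = (2 * (1 + σ) * (E 0 / S)) / (1 - σ) := by
      field_simp
    rw [hkey2, le_div_iff₀ h1σ]
    have := mul_le_mul_of_nonneg_left hφ' (by linarith : (0:ℝ) ≤ 2 * (1 + σ))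
    linarith
  · have hb := bound2 m
    have hkey3 : (σ ^ 2 / (2 * (1 - σ ^ 2))) * (2 * E 0 / S) = (σ^2 * (E 0 / S)) / (1 - σ^2) := by
      field_simp
    rw [hkey3, le_div_iff₀ hσsq]
    have := mul_le_mul_of_nonneg_left hφ' (sq_nonneg σ)
    linarith
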